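/- Let t be odd with t dividing n, and suppose Q_{n/t} can be decomposed into paths of length s. Then Q_n can be decomposed into paths of length t·s. -/

import Mathlib

open SimpleGraph Function

set_option linter.unusedSectionVars false
set_option linter.unnecessarySeqFocus false

/-- The `n`-dimensional hypercube graph on `{0,1}^n`: two vertices are adjacent
iff they differ in exactly one coordinate. -/
def Q (n : ℕ) : SimpleGraph (Fin n → ZMod 2) where
  Adj x y := hammingDist x y = 1
  symm := ⟨fun x y h => by simpa [hammingDist_comm] using h⟩
  loopless := ⟨fun x h => by simp [hammingDist_self] at h⟩

/-- A decomposition of a graph `G` into paths of length `k`: a family of paths,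
each with `k` edges, such that every edge of `G` lies in exactly one of them. -/
def PathDecomp {V : Type*} (G : SimpleGraph V) (k : ℕ) : Prop :=
  ∃ (ι : Type) (u v : ι → V) (w : ∀ i : ι, G.Walk (u i) (v i)),
    (∀ i, (w i).IsPath ∧ (w i).length = k) ∧
    ∀ e ∈ G.edgeSet, ∃! i, e ∈ (w i).edges


open SimpleGraph Function

/-- Generalized hypercube over an arbitrary finite index type. -/
def QG (ι : Type) [Fintype ι] [DecidableEq ι] : SimpleGraph (ι → ZMod 2) where
  Adj x y := hammingDist x y = 1
  symm := ⟨fun x y h => by simpa [hammingDist_comm] using h⟩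
  loopless := ⟨fun x h => by simp [hammingDist_self] at h⟩

lemma zmod2_ne_iff {a b : ZMod 2} : a ≠ b ↔ b = a + 1 := by revert a b; decide

lemma QG_adj {ι : Type} [Fintype ι] [DecidableEq ι] {x y : ι → ZMod 2} :
    (QG ι).Adj x y ↔ ∃ i, y = x + Pi.single i 1 := by
  change hammingDist x y = 1 ↔ _
  rw [hammingDist, Finset.card_eq_one]
  constructor
  · rintro ⟨a, ha⟩
    refine ⟨a, funext fun i => ?_⟩
    by_cases hia : i = a
    · subst hia
      have : i ∈ Finset.filter (fun j => x j ≠ y j) Finset.univ := by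
        rw [ha]; exact Finset.mem_singleton_self i
      rw [Finset.mem_filter] at this
      have h2 := zmod2_ne_iff.mp this.2
      simp [h2, Pi.single_apply]
    · have : i ∉ Finset.filter (fun j => x j ≠ y j) Finset.univ := by
        rw [ha]; simp [hia]
      simp only [Finset.mem_filter, Finset.mem_univ, true_and, not_not] at this
      simp [← this, Pi.single_apply, hia]
  · rintro ⟨a, rfl⟩
    refine ⟨a, ?_⟩
    ext i
    simp only [Finset.mem_filter, Finset.mem_univ, true_and, Finset.mem_singleton,
      Pi.add_apply, Pi.single_apply]
    by_cases hia : i = a <;> simp [hia, zmod2_ne_iff]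

lemma QG_adj_single {ι : Type} [Fintype ι] [DecidableEq ι] (x : ι → ZMod 2) (i : ι) :
    (QG ι).Adj x (x + Pi.single i 1) := QG_adj.mpr ⟨i, rfl⟩

section
variable {m t : ℕ} [NeZero t]

def chi (m t : ℕ) (b : Fin m) (k : ℕ) : (Fin m × Fin t) → ZMod 2 :=
  fun p => if p.1 = b ∧ (p.2 : ℕ) < k then 1 else 0
def emb (r : (Fin m × Fin t) → ZMod 2) (q : Fin m → ZMod 2) : (Fin m × Fin t) → ZMod 2 :=
  fun p => r p + q p.1
def par (x : (Fin m × Fin t) → ZMod 2) : ZMod 2 := ∑ p, x p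
def dl (x : (Fin m × Fin t) → ZMod 2) : (Fin m × Fin t) → ZMod 2 :=
  fun p => x p + x (p.1, 0)
def off (x : (Fin m × Fin t) → ZMod 2) : Fin m → ZMod 2 := fun b => x (b, 0)

lemma chi_zero (b : Fin m) : chi m t b 0 = 0 := by
  funext p; simp [chi]

lemma chi_succ {k : ℕ} (b : Fin m) (hk : k < t) :
    chi m t b (k + 1) = chi m t b k + Pi.single (b, (⟨k, hk⟩ : Fin t)) 1 := by
  funext p
  simp only [chi, Pi.add_apply, Pi.single_apply]
  rcases p with ⟨a, j⟩
  by_cases hab : a = b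
  · subst hab
    by_cases hjk : (j : ℕ) = k
    · have : ((a, j) : Fin m × Fin t) = (a, ⟨k, hk⟩) := by
        ext <;> simp [hjk]
      simp [this, hjk]
    · have : ((a, j) : Fin m × Fin t) ≠ (a, ⟨k, hk⟩) := by
        simp [Prod.ext_iff, Fin.ext_iff, hjk]
      simp only [this, if_false, if_neg]
      have : (j:ℕ) < k + 1 ↔ (j:ℕ) < k := by omega
      simp [this]
  · simp [hab, Prod.ext_iff]

lemma chi_of_ge {k : ℕ} (b : Fin m) (hk : t ≤ k) : chi m t b k = chi m t b t := by
  funext p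
  have : ((p.2 : ℕ) < k ↔ True) ∧ ((p.2 : ℕ) < t ↔ True) := by
    constructor <;> simp [lt_of_lt_of_le p.2.2 hk, p.2.2]
  simp [chi, this.1, this.2]

lemma chi_inj {k k' : ℕ} (b : Fin m) (hk : k ≤ t) (hk' : k' ≤ t)
    (h : chi m t b k = chi m t b k') : k = k' := by
  by_contra hne
  rcases Nat.lt_or_ge k k' with hlt | hge
  · have hkt : k < t := lt_of_lt_of_le hlt hk'
    have := congrFun h (b, ⟨k, hkt⟩)
    simp [chi, hlt] at this
  · have h2 : k' < k := by omega
    have hkt : k' < t := lt_of_lt_of_le h2 hk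
    have := congrFun h (b, ⟨k', hkt⟩)
    simp [chi, h2] at this

lemma emb_add_single (r : (Fin m × Fin t) → ZMod 2) (q : Fin m → ZMod 2) (b : Fin m) :
    emb r (q + Pi.single b 1) = emb r q + chi m t b t := by
  funext p
  simp only [emb, chi, Pi.add_apply, Pi.single_apply, p.2.2, and_true]
  by_cases hb : p.1 = b <;> simp [hb] <;> ring

lemma add_self_zmod2 (x : (Fin m × Fin t) → ZMod 2) : x + x = 0 := by
  funext p; exact CharTwo.add_self_eq_zero _

-- parity lemmas
lemma par_add (x y : (Fin m × Fin t) → ZMod 2) : par (x + y) = par x + par y := by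
  simp [par, Finset.sum_add_distrib]

lemma par_single (p : Fin m × Fin t) : par (Pi.single p (1 : ZMod 2)) = 1 := by
  simp [par, Finset.sum_pi_single']

lemma par_chi_t (b : Fin m) (ht : Odd t) : par (chi m t b t) = 1 := by
  have : ∀ p : Fin m × Fin t, chi m t b t p = if p.1 = b then 1 else 0 := by
    intro p; simp [chi, p.2.2]
  simp only [par, this]
  rw [Fintype.sum_prod_type]
  rw [Finset.sum_eq_single b]
  · simp only [if_pos rfl]
    rw [Finset.sum_const, Finset.card_univ, Fintype.card_fin]
    have h2 : (t : ZMod 2) = 1 := by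
      obtain ⟨c, hc⟩ := ht
      subst hc; push_cast; ring_nf
      have : (2 : ZMod 2) = 0 := by decide
      rw [this]; ring
    simp [h2]
  · intro a _ ha; simp [ha]
  · simp

-- class lemmas
lemma dl_emb (r : (Fin m × Fin t) → ZMod 2) (q : Fin m → ZMod 2) : dl (emb r q) = dl r := by
  funext p
  have : ∀ a b c : ZMod 2, a + c + (b + c) = a + b := by decide
  simp [dl, emb, this]

lemma dl_canon (x : (Fin m × Fin t) → ZMod 2) (b : Fin m) : dl x (b, 0) = 0 := by
  simp [dl, CharTwo.add_self_eq_zero]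

lemma dl_self_of_canon {r : (Fin m × Fin t) → ZMod 2} (hr : ∀ b, r (b, 0) = 0) : dl r = r := by
  funext p; simp [dl, hr]

lemma off_emb {r : (Fin m × Fin t) → ZMod 2} (hr : ∀ b, r (b, 0) = 0) (q : Fin m → ZMod 2) :
    off (emb r q) = q := by
  funext b; simp [off, emb, hr]

lemma emb_dl_off (x : (Fin m × Fin t) → ZMod 2) : emb (dl x) (off x) = x := by
  funext p
  have : ∀ a b : ZMod 2, a + b + b = a := by decide
  simp [emb, dl, off, this]

lemma dl_add (x y : (Fin m × Fin t) → ZMod 2) : dl (x + y) = dl x + dl y := by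
  funext p
  have : ∀ a b c d : ZMod 2, a + b + (c + d) = a + c + (b + d) := by decide
  simp [dl, this]

lemma emb_inj' {r : (Fin m × Fin t) → ZMod 2} {q q' : Fin m → ZMod 2}
    (h : emb r q = emb r q') : q = q' := by
  funext b
  have := congrFun h (b, 0)
  simp only [emb] at this
  exact add_left_cancel this

lemma dl_chi_eval (b c : Fin m) (k : ℕ) (j : Fin t) :
    dl (chi m t b k) (c, j) =
      (if c = b ∧ (j : ℕ) < k then 1 else 0) + (if c = b ∧ 0 < k then 1 else 0) := by
  simp [dl, chi]
  congr 1 <;> simp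

/-- interior vertex differs from any endpoint in the same lifted class -/
lemma interior_ne_endpoint {r : (Fin m × Fin t) → ZMod 2} {q q' : Fin m → ZMod 2}
    {b : Fin m} {k : ℕ} (h0 : 0 < k) (hk : k < t) :
    emb r q + chi m t b k ≠ emb r q' := by
  intro h
  have h1 : dl (emb r q + chi m t b k) = dl (emb r q') := by rw [h]
  rw [dl_add, dl_emb, dl_emb] at h1
  have h2 : dl (chi m t b k) = 0 := (add_eq_left).mp h1
  have := congrFun h2 (b, (⟨k, hk⟩ : Fin t))
  rw [dl_chi_eval] at this
  simp [h0] at this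

/-- two interior vertices in the same lifted class coincide only if all data agree -/
lemma interior_eq_interior {r : (Fin m × Fin t) → ZMod 2} {q q' : Fin m → ZMod 2}
    {b b' : Fin m} {k k' : ℕ} (h0 : 0 < k) (hk : k < t) (h0' : 0 < k') (hk' : k' < t)
    (h : emb r q + chi m t b k = emb r q' + chi m t b' k') :
    b = b' ∧ k = k' ∧ q = q' := by
  have h1 : dl (chi m t b k) = dl (chi m t b' k') := by
    have := congrArg dl h
    rw [dl_add, dl_add, dl_emb, dl_emb] at this
    exact add_left_cancel this
  have key : ∀ (bb bb' : Fin m) (kk kk' : ℕ), 0 < kk → kk < t → 0 < kk' → kk' < t →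
      dl (chi m t bb kk) = dl (chi m t bb' kk') → bb = bb' ∧ kk' ≤ kk := by
    intro bb bb' kk kk' hh0 hhk hh0' hhk' hh
    have := congrFun hh (bb, (⟨kk, hhk⟩ : Fin t))
    rw [dl_chi_eval, dl_chi_eval] at this
    simp only [hh0, and_true, if_pos rfl, hh0'] at this
    by_cases hbb : bb = bb'
    · subst hbb
      simp only [if_pos rfl, and_true, true_and] at this
      constructor
      · rfl
      · by_contra hlt
        simp [Nat.lt_of_not_le hlt] at this
    · simp [hbb, CharTwo.add_self_eq_zero] at this
  obtain ⟨hb1, hle1⟩ := key b b' k k' h0 hk h0' hk' h1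
  obtain ⟨_, hle2⟩ := key b' b k' k h0' hk' h0 hk h1.symm
  have hkk : k = k' := le_antisymm hle2 hle1
  subst hb1; subst hkk
  exact ⟨rfl, rfl, emb_inj' (add_right_cancel h)⟩

-- ascending walk flipping coordinates of block b from position k on
noncomputable def asc (u : (Fin m × Fin t) → ZMod 2) (b : Fin m) : (k : ℕ) →
    (QG (Fin m × Fin t)).Walk (u + chi m t b k) (u + chi m t b t)
  | k =>
    if h : k < t then
      Walk.cons
        (by
          have hx : u + chi m t b (k + 1) = (u + chi m t b k) + Pi.single (b, (⟨k, h⟩ : Fin t)) 1 := by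
            rw [chi_succ b h, add_assoc]
          rw [hx]
          exact QG_adj_single _ _)
        (asc u b (k + 1))
    else
      Walk.nil.copy rfl (by rw [chi_of_ge b (le_of_not_gt h)])
  termination_by k => t - k

lemma asc_unfold (u : (Fin m × Fin t) → ZMod 2) (b : Fin m) (k : ℕ) :
    asc u b k = if h : k < t then
      Walk.cons
        (by
          have hx : u + chi m t b (k + 1) = (u + chi m t b k) + Pi.single (b, (⟨k, h⟩ : Fin t)) 1 := by
            rw [chi_succ b h, add_assoc]
          rw [hx]
          exact QG_adj_single _ _)
        (asc u b (k + 1))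
    else
      Walk.nil.copy rfl (by rw [chi_of_ge b (le_of_not_gt h)]) := by
  rw [asc]

lemma asc_length (u : (Fin m × Fin t) → ZMod 2) (b : Fin m) (k : ℕ) :
    (asc u b k).length = t - k := by
  suffices H : ∀ d k, t - k ≤ d → (asc u b k).length = t - k from H (t - k) k le_rfl
  intro d
  induction d with
  | zero =>
    intro k hk
    have h : ¬ k < t := by omega
    rw [asc_unfold, dif_neg h]
    simp only [Walk.length_copy, Walk.length_nil]
    omega
  | succ d ih =>
    intro k hk
    by_cases h : k < t
    · rw [asc_unfold, dif_pos h]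
      rw [Walk.length_cons, ih (k + 1) (by omega)]
      omega
    · rw [asc_unfold, dif_neg h]
      simp only [Walk.length_copy, Walk.length_nil]
      omega

lemma asc_support_sub (u : (Fin m × Fin t) → ZMod 2) (b : Fin m) (k : ℕ) (hkt : k ≤ t)
    {x : (Fin m × Fin t) → ZMod 2} (hx : x ∈ (asc u b k).support) :
    ∃ i, k ≤ i ∧ i ≤ t ∧ x = u + chi m t b i := by
  revert hx hkt
  suffices H : ∀ d k, t - k ≤ d → k ≤ t → x ∈ (asc u b k).support →
      ∃ i, k ≤ i ∧ i ≤ t ∧ x = u + chi m t b i from H (t - k) k le_rfl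
  intro d
  induction d with
  | zero =>
    intro k hk hkt hx
    have h : ¬ k < t := by omega
    rw [asc_unfold, dif_neg h] at hx
    simp only [Walk.support_copy, Walk.support_nil, List.mem_singleton] at hx
    exact ⟨t, by omega, le_rfl, by rw [hx, chi_of_ge b (by omega)]⟩
  | succ d ih =>
    intro k hk hkt hx
    by_cases h : k < t
    · rw [asc_unfold, dif_pos h] at hx
      rw [Walk.support_cons, List.mem_cons] at hx
      rcases hx with hx | hx
      · exact ⟨k, le_rfl, by omega, hx⟩
      · obtain ⟨i, h1, h2, h3⟩ := ih (k + 1) (by omega) (by omega) hx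
        exact ⟨i, by omega, h2, h3⟩
    · rw [asc_unfold, dif_neg h] at hx
      simp only [Walk.support_copy, Walk.support_nil, List.mem_singleton] at hx
      exact ⟨t, by omega, le_rfl, by rw [hx, chi_of_ge b (by omega)]⟩

lemma asc_isPath (u : (Fin m × Fin t) → ZMod 2) (b : Fin m) (k : ℕ) :
    (asc u b k).IsPath := by
  suffices H : ∀ d k, t - k ≤ d → (asc u b k).IsPath from H (t - k) k le_rfl
  intro d
  induction d with
  | zero =>
    intro k hk
    have h : ¬ k < t := by omega
    rw [asc_unfold, dif_neg h]
    exact (Walk.isPath_copy _ _ _).mpr Walk.IsPath.nil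
  | succ d ih =>
    intro k hk
    by_cases h : k < t
    · rw [asc_unfold, dif_pos h]
      rw [Walk.cons_isPath_iff]
      refine ⟨ih (k + 1) (by omega), fun hmem => ?_⟩
      obtain ⟨i, h1, h2, h3⟩ := asc_support_sub u b (k + 1) (by omega) hmem
      have := add_left_cancel h3
      have := chi_inj b (by omega : k ≤ t) h2 this
      omega
    · rw [asc_unfold, dif_neg h]
      exact (Walk.isPath_copy _ _ _).mpr Walk.IsPath.nil

lemma asc_edges (u : (Fin m × Fin t) → ZMod 2) (b : Fin m) (k : ℕ)
    (e : Sym2 ((Fin m × Fin t) → ZMod 2)) :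
    e ∈ (asc u b k).edges ↔ ∃ i, k ≤ i ∧ i < t ∧ e = s(u + chi m t b i, u + chi m t b (i + 1)) := by
  suffices H : ∀ d k, t - k ≤ d → (e ∈ (asc u b k).edges ↔
      ∃ i, k ≤ i ∧ i < t ∧ e = s(u + chi m t b i, u + chi m t b (i + 1))) from H (t - k) k le_rfl
  intro d
  induction d with
  | zero =>
    intro k hk
    have h : ¬ k < t := by omega
    rw [asc_unfold, dif_neg h]
    simp only [Walk.edges_copy, Walk.edges_nil, List.not_mem_nil, false_iff]
    rintro ⟨i, h1, h2, h3⟩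
    omega
  | succ d ih =>
    intro k hk
    by_cases h : k < t
    · rw [asc_unfold, dif_pos h]
      rw [Walk.edges_cons, List.mem_cons, ih (k + 1) (by omega)]
      constructor
      · rintro (he | ⟨i, h1, h2, h3⟩)
        · exact ⟨k, le_rfl, h, he⟩
        · exact ⟨i, by omega, h2, h3⟩
      · rintro ⟨i, h1, h2, h3⟩
        rcases Nat.eq_or_lt_of_le h1 with hik | hik
        · exact Or.inl (by rw [h3, ← hik])
        · exact Or.inr ⟨i, by omega, h2, h3⟩
    · rw [asc_unfold, dif_neg h]
      simp only [Walk.edges_copy, Walk.edges_nil, List.not_mem_nil, false_iff]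
      rintro ⟨i, h1, h2, h3⟩
      omega


lemma fun_add_self {α : Type*} (x : α → ZMod 2) : x + x = 0 := by
  funext a; exact CharTwo.add_self_eq_zero _

lemma zmod2_eq_one_of_ne {a : ZMod 2} (h : a ≠ 0) : a = 1 := by revert h; revert a; decide

lemma single_one_inj {ι : Type*} [DecidableEq ι] {b b' : ι}
    (h : Pi.single b (1 : ZMod 2) = (Pi.single b' 1 : ι → ZMod 2)) : b = b' := by
  by_contra hne
  have := congrFun h b
  simp [Pi.single_apply, hne] at this

lemma par_flip (hodd : Odd t) (r : (Fin m × Fin t) → ZMod 2) (q : Fin m → ZMod 2) (b : Fin m) :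
    par (emb r (q + Pi.single b 1)) = par (emb r q) + 1 := by
  rw [emb_add_single, par_add, par_chi_t b hodd]

lemma flip_flip₂ (q : Fin m → ZMod 2) (b : Fin m) :
    q + Pi.single b 1 + Pi.single b 1 = q := by
  rw [add_assoc, fun_add_self, add_zero]

/-- the oriented segment between two class-neighbours: starts at the endpoint of even parity -/
noncomputable def segW (r : (Fin m × Fin t) → ZMod 2) (q : Fin m → ZMod 2) (b : Fin m) :
    (QG (Fin m × Fin t)).Walk (emb r q) (emb r (q + Pi.single b 1)) :=
  if par (emb r q) = 0 then
    (asc (emb r q) b 0).copy (by rw [chi_zero, add_zero]) (emb_add_single r q b).symm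
  else
    (((asc (emb r (q + Pi.single b 1)) b 0).copy (by rw [chi_zero, add_zero])
      ((emb_add_single r (q + Pi.single b 1) b).symm.trans
        (congrArg (emb r) (flip_flip₂ q b)))).reverse)

lemma segW_length (r : (Fin m × Fin t) → ZMod 2) (q : Fin m → ZMod 2) (b : Fin m) :
    (segW r q b).length = t := by
  unfold segW
  split <;> simp [Walk.length_copy, asc_length]

lemma segW_isPath (r : (Fin m × Fin t) → ZMod 2) (q : Fin m → ZMod 2) (b : Fin m) :
    (segW r q b).IsPath := by
  unfold segW
  split
  · exact (Walk.isPath_copy _ _ _).mpr (asc_isPath _ _ _)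
  · rw [Walk.isPath_reverse_iff]
    exact (Walk.isPath_copy _ _ _).mpr (asc_isPath _ _ _)

lemma segW_support_sub {r : (Fin m × Fin t) → ZMod 2} {q : Fin m → ZMod 2} {b : Fin m}
    {x : (Fin m × Fin t) → ZMod 2} (hx : x ∈ (segW r q b).support) :
    x = emb r q ∨ x = emb r (q + Pi.single b 1) ∨
      ∃ k, 0 < k ∧ k < t ∧
        (x = emb r q + chi m t b k ∨ x = emb r (q + Pi.single b 1) + chi m t b k) := by
  have main : ∀ q' : Fin m → ZMod 2, x ∈ (asc (emb r q') b 0).support →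
      x = emb r q' ∨ x = emb r (q' + Pi.single b 1) ∨
        ∃ k, 0 < k ∧ k < t ∧ x = emb r q' + chi m t b k := by
    intro q' hx'
    obtain ⟨i, _, h2, h3⟩ := asc_support_sub (emb r q') b 0 (Nat.zero_le t) hx'
    rcases Nat.eq_zero_or_pos i with h0 | h0
    · subst h0; rw [chi_zero, add_zero] at h3; exact Or.inl h3
    rcases Nat.eq_or_lt_of_le h2 with hit | hit
    · subst hit
      rw [← emb_add_single] at h3
      exact Or.inr (Or.inl h3)
    · exact Or.inr (Or.inr ⟨i, h0, hit, h3⟩)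
  unfold segW at hx
  split at hx
  · rw [Walk.support_copy] at hx
    rcases main q hx with h | h | ⟨k, h1, h2, h3⟩
    · exact Or.inl h
    · exact Or.inr (Or.inl h)
    · exact Or.inr (Or.inr ⟨k, h1, h2, Or.inl h3⟩)
  · rw [Walk.support_reverse, List.mem_reverse, Walk.support_copy] at hx
    rcases main (q + Pi.single b 1) hx with h | h | ⟨k, h1, h2, h3⟩
    · exact Or.inr (Or.inl h)
    · rw [flip_flip₂] at h; exact Or.inl h
    · exact Or.inr (Or.inr ⟨k, h1, h2, Or.inr h3⟩)

/-- `Cov r E e`: the `Q_n`-edge `e` is covered by the lift of the `Q_m`-edge `E`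
into the class with representative `r`. -/
def Cov (r : (Fin m × Fin t) → ZMod 2) (E : Sym2 (Fin m → ZMod 2))
    (e : Sym2 ((Fin m × Fin t) → ZMod 2)) : Prop :=
  ∃ (q : Fin m → ZMod 2) (b : Fin m) (k : Fin t),
    par (emb r q) = 0 ∧ E = s(q, q + Pi.single b 1) ∧
    e = s(emb r q + chi m t b (k : ℕ), emb r q + chi m t b ((k : ℕ) + 1))

lemma segW_edges_iff (hodd : Odd t) (r : (Fin m × Fin t) → ZMod 2) (q : Fin m → ZMod 2)
    (b : Fin m) (e : Sym2 ((Fin m × Fin t) → ZMod 2)) :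
    e ∈ (segW r q b).edges ↔ Cov r s(q, q + Pi.single b 1) e := by
  constructor
  · intro he
    unfold segW at he
    split at he
    · rw [Walk.edges_copy] at he
      obtain ⟨i, _, h2, h3⟩ := (asc_edges _ _ _ _).mp he
      exact ⟨q, b, ⟨i, h2⟩, by assumption, rfl, h3⟩
    · rw [Walk.edges_reverse, List.mem_reverse, Walk.edges_copy] at he
      obtain ⟨i, _, h2, h3⟩ := (asc_edges _ _ _ _).mp he
      refine ⟨q + Pi.single b 1, b, ⟨i, h2⟩, ?_, ?_, h3⟩
      · rw [par_flip hodd]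
        have h4 := zmod2_eq_one_of_ne (by assumption)
        rw [h4]; decide
      · rw [flip_flip₂]; exact Sym2.eq_swap
  · rintro ⟨q₂, b₂, k, hpar, hE, he⟩
    have hb2 : b₂ = b ∧ (q₂ = q ∨ q₂ = q + Pi.single b 1) := by
      rw [Sym2.eq_iff] at hE
      rcases hE with ⟨h1, h2⟩ | ⟨h1, h2⟩
      · -- h1 : q = q₂, h2 : q + single b 1 = q₂ + single b₂ 1
        subst h1
        exact ⟨(single_one_inj (add_left_cancel h2)).symm, Or.inl rfl⟩
      · -- h1 : q = q₂ + single b₂ 1, h2 : q + single b 1 = q₂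
        refine ⟨?_, Or.inr h2.symm⟩
        have hz : (Pi.single b 1 : Fin m → ZMod 2) + (Pi.single b₂ 1 : Fin m → ZMod 2) = 0 := by
          have h3 : q + ((Pi.single b 1 : Fin m → ZMod 2) + Pi.single b₂ 1) = q := by
            rw [← add_assoc, h2, ← h1]
          exact add_eq_left.mp h3
        apply single_one_inj
        calc (Pi.single b₂ 1 : Fin m → ZMod 2)
            = ((Pi.single b 1 : Fin m → ZMod 2) + Pi.single b 1) + Pi.single b₂ 1 := by
              rw [fun_add_self, zero_add]
          _ = (Pi.single b 1 : Fin m → ZMod 2) + ((Pi.single b 1 : Fin m → ZMod 2) + Pi.single b₂ 1) := by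
              rw [add_assoc]
          _ = (Pi.single b 1 : Fin m → ZMod 2) := by rw [hz, add_zero]
    obtain ⟨hb2, hq2⟩ := hb2
    subst hb2
    unfold segW
    split
    · have hq : q₂ = q := by
        rcases hq2 with h | h
        · exact h
        · exfalso
          rw [h, par_flip hodd] at hpar
          rename_i hev
          rw [hev] at hpar
          simp at hpar
      subst hq
      rw [Walk.edges_copy]
      exact (asc_edges _ _ _ _).mpr ⟨k, Nat.zero_le _, k.2, he⟩
    · have hq : q₂ = q + Pi.single b₂ 1 := by
        rcases hq2 with h | h
        · exfalso; rename_i hev; rw [← h] at hev; exact hev hpar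
        · exact h
      subst hq
      rw [Walk.edges_reverse, List.mem_reverse, Walk.edges_copy]
      exact (asc_edges _ _ _ _).mpr ⟨k, Nat.zero_le _, k.2, he⟩


noncomputable def pick {m : ℕ} {q q' : Fin m → ZMod 2} (h : (QG (Fin m)).Adj q q') : Fin m :=
  (QG_adj.mp h).choose

lemma pick_spec {m : ℕ} {q q' : Fin m → ZMod 2} (h : (QG (Fin m)).Adj q q') :
    q' = q + Pi.single (pick h) 1 :=
  (QG_adj.mp h).choose_spec

/-- lift a walk of `Q_m` into the class of `Q_n` with representative `r` -/
noncomputable def liftW (r : (Fin m × Fin t) → ZMod 2) :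
    {q q' : Fin m → ZMod 2} → (QG (Fin m)).Walk q q' →
      (QG (Fin m × Fin t)).Walk (emb r q) (emb r q')
  | _, _, Walk.nil => Walk.nil
  | _, _, Walk.cons h w =>
      ((segW r _ (pick h)).copy rfl (congrArg (emb r) (pick_spec h).symm)).append (liftW r w)

lemma liftW_nil (r : (Fin m × Fin t) → ZMod 2) {q : Fin m → ZMod 2} :
    liftW r (Walk.nil : (QG (Fin m)).Walk q q) = Walk.nil := rfl

lemma liftW_cons (r : (Fin m × Fin t) → ZMod 2) {q q₁ q' : Fin m → ZMod 2}
    (h : (QG (Fin m)).Adj q q₁) (w : (QG (Fin m)).Walk q₁ q') :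
    liftW r (Walk.cons h w) =
      ((segW r q (pick h)).copy rfl (congrArg (emb r) (pick_spec h).symm)).append
        (liftW r w) := rfl

lemma liftW_length (r : (Fin m × Fin t) → ZMod 2) {q q' : Fin m → ZMod 2}
    (w : (QG (Fin m)).Walk q q') : (liftW r w).length = t * w.length := by
  induction w with
  | nil => simp [liftW_nil]
  | cons h w ih =>
    rw [liftW_cons, Walk.length_append, Walk.length_copy, segW_length, ih, Walk.length_cons]
    ring

lemma liftW_support_sub (r : (Fin m × Fin t) → ZMod 2) {q q' : Fin m → ZMod 2}
    (w : (QG (Fin m)).Walk q q') {x : (Fin m × Fin t) → ZMod 2}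
    (hx : x ∈ (liftW r w).support) :
    (∃ a ∈ w.support, x = emb r a) ∨
      ∃ a b k, 0 < k ∧ k < t ∧ s(a, a + Pi.single b 1) ∈ w.edges ∧ x = emb r a + chi m t b k := by
  induction w with
  | nil =>
    rw [liftW_nil] at hx
    simp only [Walk.support_nil, List.mem_singleton] at hx
    exact Or.inl ⟨_, by simp, hx⟩
  | @cons q q₁ q' h w ih =>
    rw [liftW_cons, Walk.support_append, List.mem_append] at hx
    rcases hx with hx | hx
    · rw [Walk.support_copy] at hx
      rcases segW_support_sub hx with hh | hh | ⟨k, hk0, hkt, hh⟩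
      · exact Or.inl ⟨q, by simp, hh⟩
      · rw [← pick_spec h] at hh
        exact Or.inl ⟨q₁, by simp, hh⟩
      · rcases hh with hh | hh
        · refine Or.inr ⟨q, pick h, k, hk0, hkt, ?_, hh⟩
          rw [Walk.edges_cons, List.mem_cons]
          exact Or.inl (by rw [← pick_spec h])
        · refine Or.inr ⟨q + Pi.single (pick h) 1, pick h, k, hk0, hkt, ?_, hh⟩
          rw [Walk.edges_cons, List.mem_cons]
          left
          rw [flip_flip₂, ← pick_spec h]
          exact Sym2.eq_swap
    · have hx' : x ∈ (liftW r w).support := by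
        have := List.tail_subset (liftW r w).support
        exact this hx
      rcases ih hx' with ⟨a, ha, hh⟩ | ⟨a, b, k, hk0, hkt, he, hh⟩
      · exact Or.inl ⟨a, by simp [ha], hh⟩
      · exact Or.inr ⟨a, b, k, hk0, hkt, by rw [Walk.edges_cons]; exact List.mem_cons_of_mem _ he, hh⟩

lemma liftW_isPath (r : (Fin m × Fin t) → ZMod 2) {q q' : Fin m → ZMod 2}
    {w : (QG (Fin m)).Walk q q'} (hw : w.IsPath) : (liftW r w).IsPath := by
  induction w with
  | nil => rw [liftW_nil]; exact Walk.IsPath.nil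
  | @cons q q₁ q' h w ih =>
    rw [Walk.cons_isPath_iff] at hw
    obtain ⟨hw, hqns⟩ := hw
    have hrest := ih hw
    rw [liftW_cons]
    rw [Walk.isPath_def, Walk.support_append]
    apply List.Nodup.append
    · rw [Walk.support_copy]
      exact (segW_isPath r q (pick h)).support_nodup
    · exact (hrest.support_nodup).tail
    · -- disjointness
      intro x hx1 hx2
      have hx2' : x ∈ (liftW r w).support := List.tail_subset _ hx2
      have hq1notail : emb r q₁ ∉ ((liftW r w).support).tail := by
        have hnd := hrest.support_nodup
        rw [Walk.support_eq_cons] at hnd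
        exact (List.nodup_cons.mp hnd).1
      rw [Walk.support_copy] at hx1
      rcases segW_support_sub hx1 with hh | hh | ⟨k, hk0, hkt, hh⟩
      · -- x is the left endpoint emb r q
        subst hh
        rcases liftW_support_sub r w hx2' with ⟨a, ha, hh⟩ | ⟨a, b, k, hk0, hkt, he, hh⟩
        · rw [emb_inj' hh] at hqns; exact hqns ha
        · exact interior_ne_endpoint hk0 hkt hh.symm
      · -- x is the junction
        rw [← pick_spec h] at hh
        subst hh
        exact hq1notail hx2
      · -- x is an interior vertex of the segment
        rcases liftW_support_sub r w hx2' with ⟨a, ha, hh'⟩ | ⟨a', b', k', hk0', hkt', he', hh'⟩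
        · rcases hh with hh | hh <;>
            exact interior_ne_endpoint hk0 hkt (hh.symm.trans hh')
        · rcases hh with hh | hh
          · obtain ⟨hb, hk, ha⟩ :=
              interior_eq_interior hk0 hkt hk0' hkt' (hh.symm.trans hh')
            rw [← hb, ← ha] at he'
            exact hqns (Walk.fst_mem_support_of_mem_edges w he')
          · obtain ⟨hb, hk, ha⟩ :=
              interior_eq_interior hk0 hkt hk0' hkt' (hh.symm.trans hh')
            rw [← hb, ← ha, flip_flip₂] at he'
            exact hqns (Walk.snd_mem_support_of_mem_edges w he')

lemma liftW_edges_iff (hodd : Odd t) (r : (Fin m × Fin t) → ZMod 2) {q q' : Fin m → ZMod 2}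
    (w : (QG (Fin m)).Walk q q') (e : Sym2 ((Fin m × Fin t) → ZMod 2)) :
    e ∈ (liftW r w).edges ↔ ∃ E ∈ w.edges, Cov r E e := by
  induction w with
  | nil => simp [liftW_nil]
  | @cons q q₁ q' h w ih =>
    rw [liftW_cons, Walk.edges_append, List.mem_append, Walk.edges_copy, ih,
      segW_edges_iff hodd, Walk.edges_cons]
    constructor
    · rintro (hc | ⟨E, hE, hc⟩)
      · exact ⟨s(q, q₁), List.mem_cons_self, by rwa [pick_spec h]⟩
      · exact ⟨E, List.mem_cons_of_mem _ hE, hc⟩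
    · rintro ⟨E, hE, hc⟩
      rcases List.mem_cons.mp hE with hE | hE
      · subst hE; left; rw [← pick_spec h]; exact hc
      · exact Or.inr ⟨E, hE, hc⟩


lemma add_cancel_mid (a c d : (Fin m × Fin t) → ZMod 2) : a + c + (c + d) = a + d := by
  funext p
  have : ∀ x y z : ZMod 2, x + y + (y + z) = x + z := by decide
  simp [this]

lemma chi_pair (b : Fin m) (j : Fin t) :
    chi m t b (j : ℕ) + chi m t b ((j : ℕ) + 1) = Pi.single ((b, j) : Fin m × Fin t) 1 := by
  rw [chi_succ b j.2, ← add_assoc, fun_add_self, zero_add]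

lemma par_chi_flip (y : (Fin m × Fin t) → ZMod 2) (b : Fin m) (j : Fin t) :
    par (y + chi m t b ((j : ℕ) + 1)) = par (y + chi m t b (j : ℕ)) + 1 := by
  rw [chi_succ b j.2, ← add_assoc, par_add, par_single]

/-- the even-parity starting point of the segment containing the edge
`{y, y + e_{(b,j)}}` -/
def u0 (y : (Fin m × Fin t) → ZMod 2) (b : Fin m) (j : Fin t) : (Fin m × Fin t) → ZMod 2 :=
  if par (y + chi m t b (j : ℕ)) = 0 then y + chi m t b (j : ℕ) else y + chi m t b ((j : ℕ) + 1)

lemma par_u0 (y : (Fin m × Fin t) → ZMod 2) (b : Fin m) (j : Fin t) :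
    par (u0 y b j) = 0 := by
  unfold u0
  split
  · assumption
  · rw [par_chi_flip]
    rename_i hne
    rw [zmod2_eq_one_of_ne hne]
    decide

lemma cov_exists (y : (Fin m × Fin t) → ZMod 2) (b : Fin m) (j : Fin t) :
    Cov (dl (u0 y b j)) s(off (u0 y b j), off (u0 y b j) + Pi.single b 1)
      s(y, y + Pi.single ((b, j) : Fin m × Fin t) 1) := by
  refine ⟨off (u0 y b j), b, j, ?_, rfl, ?_⟩
  · rw [emb_dl_off]; exact par_u0 y b j
  · rw [emb_dl_off]
    unfold u0
    split
    · have e1 : y + chi m t b (j : ℕ) + chi m t b (j : ℕ) = y := by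
        rw [add_assoc, fun_add_self, add_zero]
      have e2 : y + chi m t b (j : ℕ) + chi m t b ((j : ℕ) + 1) =
          y + Pi.single ((b, j) : Fin m × Fin t) 1 := by
        rw [add_assoc, chi_pair b j]
      rw [e1, e2]
    · have e1 : y + chi m t b ((j : ℕ) + 1) + chi m t b (j : ℕ) =
          y + Pi.single ((b, j) : Fin m × Fin t) 1 := by
        rw [add_assoc, add_comm (chi m t b ((j : ℕ) + 1)), chi_pair b j]
      have e2 : y + chi m t b ((j : ℕ) + 1) + chi m t b ((j : ℕ) + 1) = y := by
        rw [add_assoc, fun_add_self, add_zero]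
      rw [e1, e2]
      exact Sym2.eq_swap

lemma cov_determined (hodd : Odd t) {r : (Fin m × Fin t) → ZMod 2}
    {E : Sym2 (Fin m → ZMod 2)} (hr : ∀ b', r (b', 0) = 0)
    {y : (Fin m × Fin t) → ZMod 2} {b : Fin m} {j : Fin t}
    (hc : Cov r E s(y, y + Pi.single ((b, j) : Fin m × Fin t) 1)) :
    r = dl (u0 y b j) ∧ E = s(off (u0 y b j), off (u0 y b j) + Pi.single b 1) := by
  obtain ⟨q₂, b₂, k, hpar, hE, he⟩ := hc
  rw [Sym2.eq_iff] at he
  have key : (b₂ = b ∧ k = j) ∧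
      (emb r q₂ = y + chi m t b (j : ℕ) ∨ emb r q₂ = y + chi m t b ((j : ℕ) + 1)) := by
    rcases he with ⟨h1, h2⟩ | ⟨h1, h2⟩
    · -- h1 : y = emb r q₂ + chi k, h2 : y + single = emb r q₂ + chi (k+1)
      have h3 : y + (Pi.single ((b, j) : Fin m × Fin t) 1 : (Fin m × Fin t) → ZMod 2) =
          y + (Pi.single ((b₂, k) : Fin m × Fin t) 1 : (Fin m × Fin t) → ZMod 2) := by
        calc y + (Pi.single ((b, j) : Fin m × Fin t) 1 : (Fin m × Fin t) → ZMod 2)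
            = emb r q₂ + chi m t b₂ ((k : ℕ) + 1) := h2
          _ = emb r q₂ + chi m t b₂ (k : ℕ)
                + (chi m t b₂ (k : ℕ) + chi m t b₂ ((k : ℕ) + 1)) := by rw [add_cancel_mid]
          _ = y + (Pi.single ((b₂, k) : Fin m × Fin t) 1 : (Fin m × Fin t) → ZMod 2) := by
              rw [← h1, chi_pair b₂ k]
      have hs := add_left_cancel h3
      have hbk : b₂ = b ∧ k = j := by
        have := single_one_inj hs
        rw [Prod.mk.injEq] at this
        exact ⟨this.1.symm, this.2.symm⟩
      refine ⟨hbk, Or.inl ?_⟩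
      rw [h1, ← hbk.1, ← hbk.2, add_assoc, fun_add_self, add_zero]
    · -- h1 : y = emb r q₂ + chi (k+1), h2 : y + single = emb r q₂ + chi k
      have h3 : y + (Pi.single ((b, j) : Fin m × Fin t) 1 : (Fin m × Fin t) → ZMod 2) =
          y + (Pi.single ((b₂, k) : Fin m × Fin t) 1 : (Fin m × Fin t) → ZMod 2) := by
        calc y + (Pi.single ((b, j) : Fin m × Fin t) 1 : (Fin m × Fin t) → ZMod 2)
            = emb r q₂ + chi m t b₂ (k : ℕ) := h2
          _ = emb r q₂ + chi m t b₂ ((k : ℕ) + 1)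
                + (chi m t b₂ ((k : ℕ) + 1) + chi m t b₂ (k : ℕ)) := by rw [add_cancel_mid]
          _ = y + (Pi.single ((b₂, k) : Fin m × Fin t) 1 : (Fin m × Fin t) → ZMod 2) := by
              rw [← h1, add_comm (chi m t b₂ ((k : ℕ) + 1)) (chi m t b₂ (k : ℕ)), chi_pair b₂ k]
      have hs := add_left_cancel h3
      have hbk : b₂ = b ∧ k = j := by
        have := single_one_inj hs
        rw [Prod.mk.injEq] at this
        exact ⟨this.1.symm, this.2.symm⟩
      refine ⟨hbk, Or.inr ?_⟩
      rw [h1, ← hbk.1, ← hbk.2, add_assoc, fun_add_self, add_zero]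
  obtain ⟨⟨hb2, hkj⟩, hu⟩ := key
  have hu0 : emb r q₂ = u0 y b j := by
    unfold u0
    rcases hu with hu | hu
    · rw [hu] at hpar
      rw [if_pos hpar, hu]
    · rw [hu] at hpar
      have : ¬ par (y + chi m t b (j : ℕ)) = 0 := by
        intro h0
        rw [par_chi_flip, h0] at hpar
        simp at hpar
      rw [if_neg this, hu]
  have hdl : r = dl (u0 y b j) := by
    rw [← hu0, dl_emb, dl_self_of_canon hr]
  have hoff : q₂ = off (u0 y b j) := by
    rw [← hu0, off_emb hr]
  subst hb2 hkj
  exact ⟨hdl, by rw [hE, hoff]⟩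

/-- Core construction: lifting a path decomposition of `Q_m` to `Q_{m×t}`. -/
theorem core_lift (hodd : Odd t) (s' : ℕ) (h : PathDecomp (QG (Fin m)) s') :
    PathDecomp (QG (Fin m × Fin t)) (t * s') := by
  obtain ⟨ι, ua, va, w, h1, h2⟩ := h
  refine ⟨{r : (Fin m × Fin t) → ZMod 2 // ∀ b, r (b, 0) = 0} × ι,
    fun p => emb p.1.1 (ua p.2), fun p => emb p.1.1 (va p.2),
    fun p => liftW p.1.1 (w p.2), ?_, ?_⟩
  · intro p
    exact ⟨liftW_isPath _ (h1 p.2).1, by rw [liftW_length, (h1 p.2).2]⟩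
  · intro e he
    induction e using Sym2.ind with
    | _ y z =>
    have hadj : (QG (Fin m × Fin t)).Adj y z := he
    obtain ⟨p, hz⟩ := QG_adj.mp hadj
    obtain ⟨b, j⟩ := p
    subst hz
    have hcov := cov_exists y b j
    have hE₀ : s(off (u0 y b j), off (u0 y b j) + Pi.single b 1) ∈ (QG (Fin m)).edgeSet :=
      QG_adj_single _ _
    obtain ⟨i₀, hi₀, hiu⟩ := h2 _ hE₀
    refine ⟨⟨⟨dl (u0 y b j), dl_canon _⟩, i₀⟩, ?_, ?_⟩
    · exact (liftW_edges_iff hodd _ _ _).mpr ⟨_, hi₀, hcov⟩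
    · rintro ⟨⟨r, hr⟩, i⟩ hmem
      obtain ⟨E, hEi, hcv⟩ := (liftW_edges_iff hodd _ _ _).mp hmem
      obtain ⟨hre, hEe⟩ := cov_determined hodd hr hcv
      exact Prod.ext (Subtype.ext hre) (hiu i (hEe ▸ hEi))


end

section transport

lemma hammingDist_comp_equiv {ι κ : Type} [Fintype ι] [DecidableEq ι] [Fintype κ]
    [DecidableEq κ] (f : ι ≃ κ) (x y : κ → ZMod 2) :
    hammingDist (x ∘ f) (y ∘ f) = hammingDist x y := by
  unfold hammingDist
  apply Finset.card_bij' (fun i _ => f i) (fun j _ => f.symm j) <;> simp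

/-- hypercubes over equivalent index types are isomorphic -/
noncomputable def QGIso {ι κ : Type} [Fintype ι] [DecidableEq ι] [Fintype κ] [DecidableEq κ]
    (f : ι ≃ κ) : QG ι ≃g QG κ where
  toEquiv := Equiv.arrowCongr f (Equiv.refl (ZMod 2))
  map_rel_iff' := by
    intro x y
    show hammingDist ((Equiv.arrowCongr f (Equiv.refl (ZMod 2))) x)
        ((Equiv.arrowCongr f (Equiv.refl (ZMod 2))) y) = 1 ↔ hammingDist x y = 1
    have : hammingDist ((Equiv.arrowCongr f (Equiv.refl (ZMod 2))) x)
        ((Equiv.arrowCongr f (Equiv.refl (ZMod 2))) y) = hammingDist x y := by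
      have := hammingDist_comp_equiv f.symm x y
      simpa [Equiv.arrowCongr, Function.comp] using this
    rw [this]

lemma sym2_map_symm_map {V W : Type*} (f : V ≃ W) (e : Sym2 W) :
    Sym2.map f (Sym2.map f.symm e) = e := by
  induction e using Sym2.ind with
  | _ a b => simp

lemma PathDecomp.of_iso {V W : Type*} {G : SimpleGraph V} {G' : SimpleGraph W}
    (f : G ≃g G') {k : ℕ} (h : PathDecomp G k) : PathDecomp G' k := by
  obtain ⟨ι, ua, va, w, h1, h2⟩ := h
  refine ⟨ι, fun i => f (ua i), fun i => f (va i), fun i => (w i).map f.toHom, ?_, ?_⟩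
  · intro i
    exact ⟨Walk.map_isPath_of_injective f.injective (h1 i).1,
      by rw [Walk.length_map, (h1 i).2]⟩
  · intro e he
    have he' : Sym2.map f.symm e ∈ G.edgeSet := by
      induction e using Sym2.ind with
      | _ a b =>
        rw [SimpleGraph.mem_edgeSet] at he
        rw [Sym2.map_pair_eq, SimpleGraph.mem_edgeSet]
        exact (SimpleGraph.Iso.map_adj_iff f.symm).mpr he
    have hmem : ∀ i, e ∈ ((w i).map f.toHom).edges ↔ Sym2.map f.symm e ∈ (w i).edges := by
      intro i
      rw [Walk.edges_map, List.mem_map]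
      constructor
      · rintro ⟨a, ha, rfl⟩
        have : Sym2.map (f.symm) (Sym2.map (f.toHom) a) = a := by
          induction a using Sym2.ind with
          | _ x y => simp
        rwa [this]
      · intro ha
        refine ⟨Sym2.map f.symm e, ha, ?_⟩
        induction e using Sym2.ind with
        | _ x y => simp
    obtain ⟨i₀, hi₀, hiu⟩ := h2 _ he'
    exact ⟨i₀, (hmem i₀).mpr hi₀, fun i hi => hiu i ((hmem i).mp hi)⟩

end transport

theorem decomp_lift (n t s : ℕ) (ht : Odd t) (htn : t ∣ n)
    (h : PathDecomp (Q (n / t)) s) : PathDecomp (Q n) (t * s) := by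
  have ht0 : 0 < t := ht.pos
  haveI : NeZero t := ⟨ht0.ne'⟩
  have hmt : (n / t) * t = n := Nat.div_mul_cancel htn
  have hcore : PathDecomp (QG (Fin (n / t) × Fin t)) (t * s) := by
    apply core_lift ht s
    exact h
  have hiso : QG (Fin (n / t) × Fin t) ≃g QG (Fin n) :=
    QGIso (finProdFinEquiv.trans (finCongr hmt))
  exact hcore.of_iso hiso
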